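/- In the noisy-pair model with class transition matrix T (size c×c, c ≥ 2), the conditional probability that the noisy similarity label equals 1 given that the clean similarity label equals 0 satisfies T_{s,01} := P(H̄ = 1 | H = 0) = (Σ_j (Σ_i T_{ij})² − ‖T‖_Fro²) / (c² − c), where ‖T‖_Fro² = Σ_{i,j} T_{ij}² and Σ_i T_{ij} denotes the j-th column sum of T. -/

import Mathlib

open Classical in
noncomputable def noisyPairProb (c : ℕ) (T : Matrix (Fin c) (Fin c) ℝ)
    (A : Fin c → Fin c → Fin c → Fin c → Prop) : ℝ :=
  ∑ i₁ : Fin c, ∑ j₁ : Fin c, ∑ i₂ : Fin c, ∑ j₂ : Fin c,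
    if A i₁ j₁ i₂ j₂ then (1 / (c : ℝ) ^ 2) * T i₁ j₁ * T i₂ j₂ else 0

lemma sum_offdiag' {c : ℕ} (i₁ : Fin c) (g : Fin c → ℝ) :
    (∑ i₂ : Fin c, if i₁ = i₂ then (0:ℝ) else g i₂) = (∑ i₂ : Fin c, g i₂) - g i₁ := by
  have h : ∀ i₂ : Fin c, (if i₁ = i₂ then (0:ℝ) else g i₂)
      = g i₂ - (if i₁ = i₂ then g i₂ else 0) := by
    intro i₂; by_cases h : i₁ = i₂ <;> simp [h]
  simp_rw [h, Finset.sum_sub_distrib, Finset.sum_ite_eq, Finset.mem_univ, if_true]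

theorem Ts01_eq (c : ℕ) (hc : 2 ≤ c) (T : Matrix (Fin c) (Fin c) ℝ)
    (hpos : ∀ i j, 0 ≤ T i j) (hrow : ∀ i, ∑ j, T i j = 1) :
    noisyPairProb c T (fun i₁ j₁ i₂ j₂ => i₁ ≠ i₂ ∧ j₁ = j₂) /
        noisyPairProb c T (fun i₁ _ i₂ _ => i₁ ≠ i₂) =
      ((∑ j, (∑ i, T i j) ^ 2) - ∑ i, ∑ j, (T i j) ^ 2) / ((c : ℝ) ^ 2 - c) := by
  classical
  have hc0 : (c : ℝ) ≠ 0 := by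
    have : (0:ℝ) < c := by exact_mod_cast lt_of_lt_of_le two_pos hc
    linarith
  have hc1 : (1:ℝ) < (c:ℝ) := by exact_mod_cast lt_of_lt_of_le one_lt_two hc
  have hcc : (c : ℝ) ^ 2 - c ≠ 0 := by nlinarith
  have hden : noisyPairProb c T (fun i₁ _ i₂ _ => i₁ ≠ i₂)
      = ((c:ℝ)^2 - c) / (c:ℝ)^2 := by
    unfold noisyPairProb
    beta_reduce
    trans (∑ i₁ : Fin c, ∑ j₁ : Fin c, ∑ i₂ : Fin c,
        (if i₁ = i₂ then (0:ℝ) else (1 / (c : ℝ) ^ 2) * T i₁ j₁))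
    · refine Finset.sum_congr rfl fun i₁ _ => Finset.sum_congr rfl fun j₁ _ =>
        Finset.sum_congr rfl fun i₂ _ => ?_
      by_cases h : i₁ = i₂
      · simp [h]
      · simp [h]
        rw [← Finset.mul_sum, hrow, mul_one]
    trans (∑ i₁ : Fin c, ∑ j₁ : Fin c, (((c:ℝ) - 1) * ((1 / (c : ℝ) ^ 2) * T i₁ j₁)))
    · refine Finset.sum_congr rfl fun i₁ _ => Finset.sum_congr rfl fun j₁ _ => ?_
      rw [sum_offdiag' i₁ (fun _ => (1 / (c : ℝ) ^ 2) * T i₁ j₁)]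
      simp [Finset.card_univ]
      ring
    · simp_rw [← Finset.mul_sum, ← mul_assoc]
      simp_rw [hrow]
      simp [Finset.card_univ]
      field_simp
  have hnum : noisyPairProb c T (fun i₁ j₁ i₂ j₂ => i₁ ≠ i₂ ∧ j₁ = j₂)
      = (1 / (c:ℝ)^2) * ((∑ j, (∑ i, T i j) ^ 2) - ∑ i, ∑ j, (T i j) ^ 2) := by
    unfold noisyPairProb
    beta_reduce
    trans (∑ i₁ : Fin c, ∑ j₁ : Fin c, ∑ i₂ : Fin c,
        (if i₁ = i₂ then (0:ℝ) else (1 / (c : ℝ) ^ 2) * T i₁ j₁ * T i₂ j₁))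
    · refine Finset.sum_congr rfl fun i₁ _ => Finset.sum_congr rfl fun j₁ _ =>
        Finset.sum_congr rfl fun i₂ _ => ?_
      by_cases h : i₁ = i₂
      · simp [h]
      · simp [h, Finset.sum_ite_eq]
    trans (∑ i₁ : Fin c, ∑ j₁ : Fin c,
        ((∑ i₂ : Fin c, (1 / (c : ℝ) ^ 2) * T i₁ j₁ * T i₂ j₁)
          - (1 / (c : ℝ) ^ 2) * T i₁ j₁ * T i₁ j₁))
    · refine Finset.sum_congr rfl fun i₁ _ => Finset.sum_congr rfl fun j₁ _ => ?_
      exact sum_offdiag' i₁ (fun i₂ => (1 / (c : ℝ) ^ 2) * T i₁ j₁ * T i₂ j₁)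
    · simp_rw [Finset.sum_sub_distrib]
      have e3 : (∑ i₁ : Fin c, ∑ j₁ : Fin c, ∑ i₂ : Fin c,
          (1 / (c : ℝ) ^ 2) * T i₁ j₁ * T i₂ j₁)
          = (1 / (c:ℝ)^2) * ∑ j, (∑ i, T i j) ^ 2 := by
        rw [Finset.sum_comm, Finset.mul_sum]
        refine Finset.sum_congr rfl fun j _ => ?_
        have hsq : (∑ i : Fin c, T i j) ^ 2 = ∑ i₁ : Fin c, ∑ i₂ : Fin c, T i₁ j * T i₂ j := by
          rw [sq, Finset.sum_mul_sum]
        rw [hsq, Finset.mul_sum]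
        refine Finset.sum_congr rfl fun i₁ _ => ?_
        rw [Finset.mul_sum]
        exact Finset.sum_congr rfl fun i₂ _ => by ring
      have e4 : (∑ i₁ : Fin c, ∑ j₁ : Fin c, (1 / (c : ℝ) ^ 2) * T i₁ j₁ * T i₁ j₁)
          = (1 / (c:ℝ)^2) * ∑ i, ∑ j, (T i j) ^ 2 := by
        rw [Finset.mul_sum]
        refine Finset.sum_congr rfl fun i _ => ?_
        rw [Finset.mul_sum]
        exact Finset.sum_congr rfl fun j _ => by ring
      rw [e3, e4]; ring
  rw [hnum, hden]
  rw [div_eq_div_iff (div_ne_zero hcc (pow_ne_zero 2 hc0)) hcc]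
  field_simp
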